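/- Fix k ≥ 2 and a real β with 1/k ≤ β < 1. Suppose the language L_{≤β} = { x ∈ (Σ_k²)^* : [π₁(x)]_k ≤ β·[π₂(x)]_k } is regular. Then β is rational. -/

import Mathlib

/-- The base-k value of a word of digits, most significant digit first. -/
def baseVal (k : ℕ) (w : List (Fin k)) : ℕ :=
  w.foldl (fun acc d => acc * k + d.val) 0

namespace RegBetaAux

lemma foldl_eq (k : ℕ) (w : List (Fin k)) (a : ℕ) :
    w.foldl (fun acc d => acc * k + d.val) a = a * k ^ w.length + baseVal k w := by
  induction w generalizing a with
  | nil => simp [baseVal]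
  | cons d w ih =>
      have hbv : baseVal k (d :: w) = d.val * k ^ w.length + baseVal k w := by
        simp only [baseVal, List.foldl_cons]
        rw [ih]; simp only [baseVal]; ring
      simp only [List.foldl_cons, List.length_cons]
      rw [ih, hbv]; ring

lemma baseVal_cons (k : ℕ) (d : Fin k) (w : List (Fin k)) :
    baseVal k (d :: w) = d.val * k ^ w.length + baseVal k w := by
  simp only [baseVal, List.foldl_cons]
  rw [foldl_eq]; simp only [baseVal]; ring

lemma baseVal_append (k : ℕ) (a b : List (Fin k)) :
    baseVal k (a ++ b) = baseVal k a * k ^ b.length + baseVal k b := by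
  simp only [baseVal, List.foldl_append]
  rw [foldl_eq]; simp only [baseVal]

lemma baseVal_replicate_zero (k : ℕ) (d : Fin k) (hd : d.val = 0) (t : ℕ) :
    baseVal k (List.replicate t d) = 0 := by
  induction t with
  | zero => simp [baseVal]
  | succ t ih => rw [List.replicate_succ, baseVal_cons, hd, ih]; ring

lemma baseVal_replicate_top (k : ℕ) (hk : 1 ≤ k) (d : Fin k) (hd : d.val = k - 1) (t : ℕ) :
    baseVal k (List.replicate t d) + 1 = k ^ t := by
  induction t with
  | zero => simp [baseVal]
  | succ t ih =>
      rw [List.replicate_succ, baseVal_cons, hd, List.length_replicate]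
      calc (k - 1) * k ^ t + baseVal k (List.replicate t d) + 1
          = (k - 1) * k ^ t + k ^ t := by omega
        _ = (k - 1 + 1) * k ^ t := by ring
        _ = k * k ^ t := by rw [Nat.sub_add_cancel hk]
        _ = k ^ (t + 1) := by ring

/-- The word of length `m` whose base-`k` value is `N % k ^ m`. -/
def digitsWord (k : ℕ) (hk : 0 < k) : ℕ → ℕ → List (Fin k)
  | 0, _ => []
  | m + 1, N => digitsWord k hk m (N / k) ++ [⟨N % k, Nat.mod_lt _ hk⟩]

lemma length_digitsWord (k : ℕ) (hk : 0 < k) (m N : ℕ) :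
    (digitsWord k hk m N).length = m := by
  induction m generalizing N with
  | zero => simp [digitsWord]
  | succ m ih => simp [digitsWord, ih]

lemma mod_pow_succ' (k m N : ℕ) (hk : 0 < k) :
    N % k ^ (m + 1) = (N / k % k ^ m) * k + N % k := by
  have hkm : 0 < k ^ m := Nat.pow_pos hk
  have h1 : N / k % k ^ m * k + N % k < k ^ m * k := by
    have a := Nat.mod_lt (N / k) hkm
    have b := Nat.mod_lt N hk
    nlinarith
  have h2 : N = (N / k / k ^ m) * (k ^ m * k) + (N / k % k ^ m * k + N % k) := by
    calc N = N % k + k * (N / k) := (Nat.mod_add_div _ _).symm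
      _ = N % k + k * (N / k % k ^ m + k ^ m * (N / k / k ^ m)) := by
          rw [Nat.mod_add_div, Nat.mod_add_div, Nat.mod_add_div]
      _ = (N / k / k ^ m) * (k ^ m * k) + (N / k % k ^ m * k + N % k) := by ring
  rw [pow_succ]
  conv_lhs => rw [h2]
  rw [Nat.mul_comm (N / k / k ^ m) (k ^ m * k), Nat.mul_add_mod]
  exact Nat.mod_eq_of_lt h1

lemma baseVal_digitsWord (k : ℕ) (hk : 0 < k) (m : ℕ) : ∀ N : ℕ,
    baseVal k (digitsWord k hk m N) = N % k ^ m := by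
  induction m with
  | zero => intro N; simp [digitsWord, baseVal, Nat.mod_one]
  | succ m ih =>
      intro N
      show baseVal k (digitsWord k hk m (N / k) ++ [⟨N % k, Nat.mod_lt _ hk⟩]) = _
      rw [baseVal_append, ih]
      simp only [baseVal, List.foldl_cons, List.foldl_nil, List.length_singleton,
        Nat.zero_mul, Nat.zero_add, pow_one]
      rw [mod_pow_succ' k m N hk]

end RegBetaAux

open RegBetaAux in
theorem regular_leq_beta_implies_rational (k : ℕ) (hk : 2 ≤ k) (β : ℝ)
    (hβ₁ : 1 / (k : ℝ) ≤ β) (hβ₂ : β < 1)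
    (hreg : Language.IsRegular
      { x : List (Fin k × Fin k) |
        (baseVal k (x.map Prod.fst) : ℝ) ≤ β * (baseVal k (x.map Prod.snd) : ℝ) }) :
    ∃ q : ℚ, (q : ℝ) = β := by
  obtain ⟨σ, fσ, M, hM⟩ := hreg
  haveI := fσ
  have hk0 : 0 < k := by omega
  have hk2R : (2 : ℝ) ≤ (k : ℝ) := by exact_mod_cast hk
  have hk1 : (1 : ℝ) < (k : ℝ) := by linarith
  have hβ0 : 0 ≤ β := le_trans (by positivity) hβ₁
  set N : ℕ → ℕ := fun m => ⌊β * ((k : ℝ) ^ m - 1)⌋₊ with hNdef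
  have hpowR : ∀ m : ℕ, (1 : ℝ) ≤ (k : ℝ) ^ m := fun m => one_le_pow₀ (by linarith)
  have hnn : ∀ m : ℕ, 0 ≤ β * ((k : ℝ) ^ m - 1) :=
    fun m => mul_nonneg hβ0 (by linarith [hpowR m])
  have hNle : ∀ m, (N m : ℝ) ≤ β * ((k : ℝ) ^ m - 1) := fun m => Nat.floor_le (hnn m)
  have hNgt : ∀ m, β * ((k : ℝ) ^ m - 1) < N m + 1 := fun m => Nat.lt_floor_add_one _
  have hNlt : ∀ m, N m < k ^ m := by
    intro m
    have h1 : β * ((k : ℝ) ^ m - 1) < (k : ℝ) ^ m := by nlinarith [hpowR m]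
    exact (Nat.floor_lt (hnn m)).2 (by push_cast; exact h1)
  set dtop : Fin k := ⟨k - 1, by omega⟩ with hdtop
  set dzero : Fin k := ⟨0, by omega⟩ with hdzero
  set P : ℕ → List (Fin k × Fin k) :=
    fun m => (digitsWord k hk0 m (N m)).zip (List.replicate m dtop) with hPdef
  set Q : ℕ → ℕ → List (Fin k × Fin k) :=
    fun t c => (digitsWord k hk0 t c).zip (List.replicate t dzero) with hQdef
  have hPfst : ∀ m, (P m).map Prod.fst = digitsWord k hk0 m (N m) := by
    intro m
    exact List.map_fst_zip (by simp [length_digitsWord])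
  have hPsnd : ∀ m, (P m).map Prod.snd = List.replicate m dtop := by
    intro m
    exact List.map_snd_zip (by simp [length_digitsWord])
  have hQfst : ∀ t c, (Q t c).map Prod.fst = digitsWord k hk0 t c := by
    intro t c
    exact List.map_fst_zip (by simp [length_digitsWord])
  have hQsnd : ∀ t c, (Q t c).map Prod.snd = List.replicate t dzero := by
    intro t c
    exact List.map_snd_zip (by simp [length_digitsWord])
  have hBtop : ∀ m, (baseVal k (List.replicate m dtop) : ℝ) = (k : ℝ) ^ m - 1 := by
    intro m
    have h := baseVal_replicate_top k (by omega) dtop rfl m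
    have h2 : (baseVal k (List.replicate m dtop) : ℝ) + 1 = (k : ℝ) ^ m := by
      exact_mod_cast h
    linarith
  have hmem : ∀ (m t c : ℕ), c < k ^ t →
      ((P m ++ Q t c) ∈ M.accepts ↔
        (c : ℝ) ≤ (β * ((k : ℝ) ^ m - 1) - N m) * (k : ℝ) ^ t) := by
    intro m t c hc
    have hmem0 : ∀ x : List (Fin k × Fin k), x ∈ M.accepts ↔
        (baseVal k (x.map Prod.fst) : ℝ) ≤ β * (baseVal k (x.map Prod.snd) : ℝ) := by
      intro x; rw [hM]; exact Iff.rfl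
    rw [hmem0]
    simp only [List.map_append, hPfst, hPsnd, hQfst, hQsnd]
    rw [baseVal_append, baseVal_append]
    simp only [baseVal_digitsWord, baseVal_replicate_zero k dzero rfl,
      length_digitsWord, List.length_replicate]
    rw [Nat.mod_eq_of_lt (hNlt m), Nat.mod_eq_of_lt hc]
    push_cast
    rw [hBtop m]
    constructor <;> intro h <;> nlinarith [h]
  have key : ∀ m n : ℕ,
      M.evalFrom M.start (P m) = M.evalFrom M.start (P n) → ∀ t : ℕ,
      (β * ((k : ℝ) ^ m - 1) - N m) * (k : ℝ) ^ t <
        (β * ((k : ℝ) ^ n - 1) - N n) * (k : ℝ) ^ t + 1 := by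
    intro m n h t
    set r := β * ((k : ℝ) ^ m - 1) - N m with hr
    have hr0 : 0 ≤ r := by rw [hr]; linarith [hNle m]
    have hr1 : r < 1 := by rw [hr]; linarith [hNgt m]
    have hkt0 : (0 : ℝ) < (k : ℝ) ^ t := by positivity
    have hrk0 : 0 ≤ r * (k : ℝ) ^ t := mul_nonneg hr0 (le_of_lt hkt0)
    set c := ⌊r * (k : ℝ) ^ t⌋₊ with hc
    have hcle : (c : ℝ) ≤ r * (k : ℝ) ^ t := Nat.floor_le hrk0
    have hclt : c < k ^ t := by
      have h1 : r * (k : ℝ) ^ t < (k : ℝ) ^ t := by nlinarith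
      exact (Nat.floor_lt hrk0).2 (by push_cast; exact h1)
    have h1 : (P m ++ Q t c) ∈ M.accepts := (hmem m t c hclt).2 hcle
    have h2 : (P n ++ Q t c) ∈ M.accepts := by
      rw [DFA.mem_accepts] at h1 ⊢
      simp only [DFA.eval, DFA.evalFrom_of_append] at h1 ⊢
      rw [← h]
      exact h1
    have h3 := (hmem n t c hclt).1 h2
    have h4 : r * (k : ℝ) ^ t < (c : ℝ) + 1 := Nat.lt_floor_add_one _
    linarith
  obtain ⟨m, n, hmn, hst⟩ :=
    Finite.exists_ne_map_eq_of_infinite (fun m : ℕ => M.evalFrom M.start (P m))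
  have hreq : β * ((k : ℝ) ^ m - 1) - N m = β * ((k : ℝ) ^ n - 1) - N n := by
    by_contra hne
    set d := |(β * ((k : ℝ) ^ m - 1) - N m) - (β * ((k : ℝ) ^ n - 1) - N n)| with hd
    have hd0 : 0 < d := abs_pos.2 (sub_ne_zero.2 hne)
    obtain ⟨t, ht⟩ := pow_unbounded_of_one_lt (1 / d) hk1
    have a1 := key m n hst t
    have a2 := key n m hst.symm t
    have hkt0 : (0 : ℝ) < (k : ℝ) ^ t := by positivity
    have hlt : d * (k : ℝ) ^ t < 1 := by
      rcases le_total (β * ((k : ℝ) ^ n - 1) - N n) (β * ((k : ℝ) ^ m - 1) - N m) with hle | hle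
      · rw [hd, abs_of_nonneg (by linarith)]; nlinarith
      · rw [hd, abs_of_nonpos (by linarith)]; nlinarith
    rw [div_lt_iff₀ hd0] at ht
    nlinarith
  have hknm : (k : ℝ) ^ n ≠ (k : ℝ) ^ m := by
    rcases lt_or_gt_of_ne hmn with h | h
    · exact ne_of_gt (pow_lt_pow_right₀ hk1 h)
    · exact ne_of_lt (pow_lt_pow_right₀ hk1 h)
  have hne : ((k : ℝ) ^ n - (k : ℝ) ^ m) ≠ 0 := sub_ne_zero.2 hknm
  have heq : β * ((k : ℝ) ^ n - (k : ℝ) ^ m) = (N n : ℝ) - N m := by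
    ring_nf at hreq ⊢
    linarith
  refine ⟨((N n : ℚ) - N m) / ((k : ℚ) ^ n - (k : ℚ) ^ m), ?_⟩
  push_cast
  rw [div_eq_iff hne]
  linear_combination -heq
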